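/- arXiv:1702.00132 — 2 statements merged into one kernel-verified Lean document; each statement's English description precedes it below -/
import Mathlib

section
/- For a permutation w and a reduced expression ρ ∈ R(w), the weak descent composition des(ρ) equals ∅ (i.e., ρ is virtual) if and only if ρ admits no ρ-compatible sequence. -/
open Equiv MvPolynomial

/-- The simple transposition `sᵢ` interchanging `i` and `i + 1`. -/
def simpleT (i : ℕ) : Equiv.Perm ℕ := Equiv.swap i (i + 1)

/-- A permutation of the positive integers: it fixes `0` and all but finitely many values. -/
def IsPermOfPos (w : Equiv.Perm ℕ) : Prop :=
  w 0 = 0 ∧ ∃ N, ∀ i, N < i → w i = i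

/-- The Coxeter length of `w`, i.e. the number of inversions among positions `≥ 1`. -/
noncomputable def permLen (w : Equiv.Perm ℕ) : ℕ :=
  Set.ncard {p : ℕ × ℕ | 1 ≤ p.1 ∧ p.1 < p.2 ∧ w p.2 < w p.1}

/-- `ρ` is a reduced expression for `w`, recorded left-to-right as `(i_ℓ, …, i_1)`,
so that `w = s_{i_ℓ} ⋯ s_{i_1}` and the length of `ρ` is the Coxeter length of `w`. -/
def IsReducedWord (w : Equiv.Perm ℕ) (ρ : List ℕ) : Prop :=
  (∀ i ∈ ρ, 1 ≤ i) ∧ (ρ.map simpleT).prod = w ∧ ρ.length = permLen w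

/-- `α` is a `ρ`-compatible sequence.  Here, following the paper, the entries
of the reduced expression `ρ = (i_ℓ, …, i_1)` are indexed from the right,
i.e. `ρ_j = i_j`, so the conditions are stated for `ρ.reverse`. -/
def IsCompatible (ρ α : List ℕ) : Prop :=
  α.length = ρ.length ∧
  (∀ j, j < α.length → 1 ≤ α.getD j 0) ∧
  (∀ j, j + 1 < α.length → α.getD j 0 ≤ α.getD (j + 1) 0) ∧
  (∀ j, j + 1 < α.length →
    ρ.reverse.getD j 0 < ρ.reverse.getD (j + 1) 0 → α.getD j 0 < α.getD (j + 1) 0) ∧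
  (∀ j, j < α.length → α.getD j 0 ≤ ρ.reverse.getD j 0)

/-- The Schubert polynomial `𝔖_w`, as the generating function of compatible sequences. -/
noncomputable def SchubertPoly (w : Equiv.Perm ℕ) : MvPolynomial ℕ ℤ :=
  ∑ᶠ ρ ∈ {ρ : List ℕ | IsReducedWord w ρ},
    ∑ᶠ α ∈ {α : List ℕ | IsCompatible ρ α}, (α.map X).prod

/-- `flatten a` removes the zero parts of the weak composition `a`. -/
def flat (a : List ℕ) : List ℕ := a.filter (· ≠ 0)

/-- `Refines β α` : the strong composition `α` is obtained from `β` by summing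
consecutive (nonempty) blocks of parts. -/
def Refines (β α : List ℕ) : Prop :=
  ∃ L : List (List ℕ), (∀ l ∈ L, l ≠ []) ∧ L.flatten = β ∧ L.map List.sum = α

/-- The monomial `x_1^{b_1} ⋯ x_n^{b_n}` associated to a weak composition `b` of length `n`. -/
noncomputable def wcMonomial (b : List ℕ) : MvPolynomial ℕ ℤ :=
  ((List.range b.length).map fun j => X (j + 1) ^ b.getD j 0).prod

/-- `Dominates b a` : `b ≥ a`, i.e. `b_1 + ⋯ + b_k ≥ a_1 + ⋯ + a_k` for all `k`. -/
def Dominates (b a : List ℕ) : Prop := ∀ k, (a.take k).sum ≤ (b.take k).sum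

/-- The fundamental slide polynomial `𝔉_a` of a weak composition `a`. -/
noncomputable def fundSlide (a : List ℕ) : MvPolynomial ℕ ℤ :=
  ∑ᶠ b ∈ {b : List ℕ | b.length = a.length ∧ Dominates b a ∧ Refines (flat b) (flat a)},
    wcMonomial b

/-- The fundamental slide polynomial extended by `𝔉_∅ = 0` (`none` plays the role of `∅`). -/
noncomputable def fundSlideO : Option (List ℕ) → MvPolynomial ℕ ℤ
  | none => 0
  | some a => fundSlide a

/-- Gessel's fundamental quasisymmetric polynomial `F_α(x_1, …, x_k)`. -/
noncomputable def fundQuasi (k : ℕ) (α : List ℕ) : MvPolynomial ℕ ℤ :=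
  ∑ᶠ b ∈ {b : List ℕ | b.length = k ∧ Refines (flat b) α}, wcMonomial b

/-- The run decomposition of a word: the maximal increasing runs, leftmost first. -/
def runsOf (ρ : List ℕ) : List (List ℕ) := ρ.splitBy (· < ·)

/-- The strong descent composition `Des(ρ) = (|ρ^{(1)}|, …, |ρ^{(k)}|)`,
where `ρ^{(1)}` is the rightmost run. -/
def strongDes (ρ : List ℕ) : List ℕ := ((runsOf ρ).map List.length).reverse

/-- Helper computing, left-to-right, the pairs `(r_i, |ρ^{(i)}|)` of
Definition 2.3: `r_k` is the first letter of the leftmost run, and each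
subsequent `r_i = min(ρ^{(i)}_1, r_{i+1} - 1)` (computed in `ℤ`). -/
def desPairsAux : Option ℤ → List (List ℕ) → List (ℤ × ℕ)
  | _, [] => []
  | prev, run :: rest =>
    let r : ℤ :=
      match prev with
      | none => (run.headD 0 : ℤ)
      | some p => min ((run.headD 0 : ℤ)) (p - 1)
    (r, run.length) :: desPairsAux (some r) rest

/-- The weak descent composition `des(ρ)`: the weak composition of length `r_k`
with `des(ρ)_{r_i} = |ρ^{(i)}|` and all other parts `0`, provided all `r_i ≥ 1`;
otherwise `none` (i.e. `des(ρ) = ∅` and `ρ` is virtual). -/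
def weakDes (ρ : List ℕ) : Option (List ℕ) :=
  let ps := desPairsAux none (runsOf ρ)
  if ∀ q ∈ ps, 1 ≤ q.1 then
    some ((List.range ((ps.headD (0, 0)).1.toNat)).map fun j =>
      (((ps.find? fun q => q.1 == (j + 1 : ℤ)).map Prod.snd).getD 0))
  else none

/-- The Stanley symmetric polynomial `S_w(x_1, …, x_k)`. -/
noncomputable def StanleyPoly (k : ℕ) (w : Equiv.Perm ℕ) : MvPolynomial ℕ ℤ :=
  ∑ᶠ ρ ∈ {ρ : List ℕ | IsReducedWord w ρ}, fundQuasi k (strongDes ρ)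

/-- Set the variables `x_{k+1}, x_{k+2}, …` to zero. -/
noncomputable def truncVars (k : ℕ) : MvPolynomial ℕ ℤ →ₐ[ℤ] MvPolynomial ℕ ℤ :=
  aeval fun i => if i ≤ k then X i else 0

/-- Set the single variable `x_k` to zero. -/
noncomputable def setVarZero (k : ℕ) : MvPolynomial ℕ ℤ →ₐ[ℤ] MvPolynomial ℕ ℤ :=
  aeval fun i => if i = k then 0 else X i


/-! ### Auxiliary development for Statement 1 -/

section Aux

open List

/-- The inversion set of a permutation. -/
def InvSet (w : Equiv.Perm ℕ) : Set (ℕ × ℕ) :=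
  {p : ℕ × ℕ | 1 ≤ p.1 ∧ p.1 < p.2 ∧ w p.2 < w p.1}

lemma permLen_eq_ncard_invSet (w : Equiv.Perm ℕ) : permLen w = (InvSet w).ncard := rfl

lemma swap_order (i x y : ℕ) (hxy : x < y)
    (h : Equiv.swap i (i + 1) y < Equiv.swap i (i + 1) x) : x = i ∧ y = i + 1 := by
  rw [Equiv.swap_apply_def, Equiv.swap_apply_def] at h
  split_ifs at h <;> omega

lemma invSet_mul_subset (i : ℕ) (u : Equiv.Perm ℕ) :
    InvSet (simpleT i * u) ⊆ InvSet u ∪ {(u.symm i, u.symm (i + 1))} := by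
  rintro ⟨a, b⟩ ⟨h1, h2, h3⟩
  simp only [simpleT, Equiv.Perm.mul_apply] at h3
  by_cases hub : u b < u a
  · exact Or.inl ⟨h1, h2, hub⟩
  · have hne : u a ≠ u b := fun he => (ne_of_lt h2) (u.injective he)
    have hlt : u a < u b := lt_of_le_of_ne (not_lt.1 hub) hne
    obtain ⟨hx, hy⟩ := swap_order i _ _ hlt h3
    right
    have ha : a = u.symm i := by rw [← hx]; simp
    have hb : b = u.symm (i + 1) := by rw [← hy]; simp
    simp [ha, hb, Prod.ext_iff]

lemma invSet_finite_card (l : List ℕ) :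
    (InvSet ((l.map simpleT).prod)).Finite ∧
      (InvSet ((l.map simpleT).prod)).ncard ≤ l.length := by
  induction l with
  | nil =>
    have h : InvSet (((List.nil (α := ℕ)).map simpleT).prod) = ∅ := by
      ext ⟨a, b⟩
      simp only [InvSet, List.map_nil, List.prod_nil, Set.mem_setOf_eq,
        Set.mem_empty_iff_false, iff_false, Equiv.Perm.coe_one, id_eq]
      omega
    rw [h]
    simp
  | cons i l ih =>
    have hprod : ((i :: l).map simpleT).prod = simpleT i * (l.map simpleT).prod := by
      simp
    rw [hprod]
    set u := (l.map simpleT).prod with hu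
    have hsub := invSet_mul_subset i u
    have hfin : (InvSet u ∪ {(u.symm i, u.symm (i + 1))}).Finite :=
      ih.1.union (Set.finite_singleton _)
    refine ⟨hfin.subset hsub, ?_⟩
    calc (InvSet (simpleT i * u)).ncard ≤ (InvSet u ∪ {(u.symm i, u.symm (i + 1))}).ncard :=
          Set.ncard_le_ncard hsub hfin
      _ ≤ (InvSet u).ncard + ({(u.symm i, u.symm (i + 1))} : Set (ℕ × ℕ)).ncard :=
          Set.ncard_union_le _ _
      _ ≤ l.length + 1 := by
          rw [Set.ncard_singleton]
          exact Nat.add_le_add_right ih.2 1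
      _ = (i :: l).length := by simp

lemma permLen_le_length (l : List ℕ) : permLen ((l.map simpleT).prod) ≤ l.length :=
  (invSet_finite_card l).2

lemma not_chain'_split {l : List ℕ} (h : ¬ l.Chain' (· ≠ ·)) :
    ∃ A a B, l = A ++ a :: a :: B := by
  induction l with
  | nil => exact absurd List.isChain_nil h
  | cons a l ih =>
    cases l with
    | nil => exact absurd (List.isChain_singleton a) h
    | cons b t =>
      simp only [List.Chain', List.isChain_cons_cons] at h
      by_cases hab : a = b
      · exact ⟨[], a, t, by simp [hab]⟩
      · have : ¬ (b :: t).Chain' (· ≠ ·) := fun hc => h ⟨hab, hc⟩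
        obtain ⟨A, c, B, hABC⟩ := ih this
        exact ⟨a :: A, c, B, by rw [List.cons_append, hABC]⟩

lemma reduced_chain_ne {w : Equiv.Perm ℕ} {ρ : List ℕ} (hρ : IsReducedWord w ρ) :
    ρ.Chain' (· ≠ ·) := by
  by_contra h
  obtain ⟨A, a, B, rfl⟩ := not_chain'_split h
  have hprod : ((A ++ a :: a :: B).map simpleT).prod = ((A ++ B).map simpleT).prod := by
    simp only [List.map_append, List.prod_append, List.map_cons, List.prod_cons]
    rw [← mul_assoc (simpleT a),
      show simpleT a * simpleT a = 1 from Equiv.swap_mul_self _ _, one_mul]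
  have hle : permLen w ≤ (A ++ B).length := by
    rw [← hρ.2.1, hprod]; exact permLen_le_length _
  have hlen := hρ.2.2
  simp only [List.length_append, List.length_cons] at hlen hle
  omega

/-- The list of the values `γ_t = min(ρ_t, γ_{t-1} - [ρ_t < ρ_{t-1}])`, scanning a tail of the
word, given the previous value `g` and previous letter `p`. -/
def glist : ℤ → ℕ → List ℕ → List ℤ
  | _, _, [] => []
  | g, p, a :: l =>
    let g' := min (a : ℤ) (g - if a < p then 1 else 0)
    g' :: glist g' a l

/-- The full list of `γ` values of a word. -/
def gammaL : List ℕ → List ℤ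
  | [] => []
  | a :: l => (a : ℤ) :: glist a a l

@[simp] lemma glist_nil (g : ℤ) (p : ℕ) : glist g p [] = [] := rfl

lemma glist_cons (g : ℤ) (p a : ℕ) (l : List ℕ) :
    glist g p (a :: l) =
      min (a : ℤ) (g - if a < p then 1 else 0) ::
        glist (min (a : ℤ) (g - if a < p then 1 else 0)) a l := rfl

@[simp] lemma glist_length (g : ℤ) (p : ℕ) (l : List ℕ) : (glist g p l).length = l.length := by
  induction l generalizing g p with
  | nil => rfl
  | cons a l ih => rw [glist_cons]; simp [ih]

@[simp] lemma gammaL_length (l : List ℕ) : (gammaL l).length = l.length := by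
  cases l with
  | nil => rfl
  | cons a l => simp [gammaL]

lemma glist_run (t : List ℕ) (a : ℕ) (g : ℤ) (rest : List ℕ)
    (hc : (a :: t).Chain' (· < ·)) (hg : g ≤ (a : ℤ)) :
    glist g a (t ++ rest) = t.map (fun _ => g) ++ glist g (t.getLastD a) rest := by
  induction t generalizing a with
  | nil => simp
  | cons b t ih =>
    simp only [List.Chain', List.isChain_cons_cons] at hc
    have hab : a < b := hc.1
    have : ¬ b < a := by omega
    rw [List.cons_append, glist_cons, if_neg this]
    have hmin : min (b : ℤ) (g - 0) = g := by
      rw [sub_zero]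
      exact min_eq_right (le_trans hg (by exact_mod_cast hab.le))
    rw [hmin]
    rw [ih b hc.2 (le_trans hg (by exact_mod_cast hab.le)), List.getLastD_cons]
    simp

lemma glist_getD_zero (l : List ℕ) (hl : l ≠ []) (g : ℤ) (p : ℕ) :
    (glist g p l).getD 0 0 = min (l.getD 0 0 : ℤ) (g - if l.getD 0 0 < p then 1 else 0) := by
  cases l with
  | nil => exact absurd rfl hl
  | cons a l => rw [glist_cons]; simp

lemma glist_getD_succ (l : List ℕ) (g : ℤ) (p : ℕ) (t : ℕ) (ht : t + 1 < l.length) :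
    (glist g p l).getD (t + 1) 0 =
      min (l.getD (t + 1) 0 : ℤ)
        ((glist g p l).getD t 0 - if l.getD (t + 1) 0 < l.getD t 0 then 1 else 0) := by
  induction l generalizing g p t with
  | nil => simp at ht
  | cons a l ih =>
    rw [glist_cons]
    cases t with
    | zero =>
      have hl : l ≠ [] := by
        simp only [List.length_cons] at ht
        exact List.ne_nil_of_length_pos (by omega)
      simp only [List.getD_cons_succ, List.getD_cons_zero]
      rw [glist_getD_zero l hl]
    | succ s =>
      simp only [List.length_cons] at ht
      simp only [List.getD_cons_succ]
      exact ih _ _ s (by omega)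

lemma gammaL_getD_succ (ρ : List ℕ) (t : ℕ) (ht : t + 1 < ρ.length) :
    (gammaL ρ).getD (t + 1) 0 =
      min (ρ.getD (t + 1) 0 : ℤ)
        ((gammaL ρ).getD t 0 - if ρ.getD (t + 1) 0 < ρ.getD t 0 then 1 else 0) := by
  cases ρ with
  | nil => simp at ht
  | cons a l =>
    simp only [gammaL]
    cases t with
    | zero =>
      have hl : l ≠ [] := by
        simp only [List.length_cons] at ht
        exact List.ne_nil_of_length_pos (by omega)
      simp only [List.getD_cons_succ, List.getD_cons_zero]
      rw [glist_getD_zero l hl]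
    | succ s =>
      simp only [List.length_cons] at ht
      simp only [List.getD_cons_succ]
      exact glist_getD_succ l a a s (by omega)

lemma gammaL_getD_zero (ρ : List ℕ) (hρ : ρ ≠ []) :
    (gammaL ρ).getD 0 0 = (ρ.getD 0 0 : ℤ) := by
  cases ρ with
  | nil => exact absurd rfl hρ
  | cons a l => simp [gammaL]

lemma gammaL_le (ρ : List ℕ) (t : ℕ) (ht : t < ρ.length) :
    (gammaL ρ).getD t 0 ≤ (ρ.getD t 0 : ℤ) := by
  cases t with
  | zero =>
    cases ρ with
    | nil => simp at ht
    | cons a l => simp [gammaL]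
  | succ s =>
    rw [gammaL_getD_succ ρ s ht]
    exact min_le_left _ _

lemma gammaL_mono (ρ : List ℕ) (t : ℕ) (ht : t + 1 < ρ.length) :
    (gammaL ρ).getD (t + 1) 0 ≤ (gammaL ρ).getD t 0 := by
  rw [gammaL_getD_succ ρ t ht]
  refine le_trans (min_le_right _ _) ?_
  split_ifs <;> omega

lemma gammaL_strict (ρ : List ℕ) (t : ℕ) (ht : t + 1 < ρ.length)
    (hd : ρ.getD (t + 1) 0 < ρ.getD t 0) :
    (gammaL ρ).getD (t + 1) 0 ≤ (gammaL ρ).getD t 0 - 1 := by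
  rw [gammaL_getD_succ ρ t ht, if_pos hd]
  exact min_le_right _ _

lemma getD_reverse (l : List ℕ) (j : ℕ) (hj : j < l.length) :
    l.reverse.getD j 0 = l.getD (l.length - 1 - j) 0 := by
  rw [List.getD_eq_getElem (n := j) (hn := by simpa using hj),
    List.getD_eq_getElem (n := l.length - 1 - j) (hn := by omega), List.getElem_reverse]

/-- Statement A: a compatible sequence exists iff all `γ` values are at least `1`. -/
lemma compat_iff_gamma (ρ : List ℕ) :
    (∃ α : List ℕ, IsCompatible ρ α) ↔ ∀ t, t < ρ.length → 1 ≤ (gammaL ρ).getD t 0 := by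
  constructor
  · rintro ⟨α, hlen, hpos, hmono, hstrict, hle⟩
    have key : ∀ t, t < ρ.length → (α.getD (ρ.length - 1 - t) 0 : ℤ) ≤ (gammaL ρ).getD t 0 := by
      intro t
      induction t with
      | zero =>
        intro ht
        have h5 := hle (ρ.length - 1) (by omega)
        rw [getD_reverse ρ _ (by omega)] at h5
        have e1 : ρ.length - 1 - (ρ.length - 1) = 0 := by omega
        rw [e1] at h5
        rw [Nat.sub_zero, gammaL_getD_zero ρ (List.ne_nil_of_length_pos ht)]
        exact_mod_cast h5
      | succ s ih =>
        intro ht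
        set j := ρ.length - 2 - s with hj
        have ej0 : ρ.length - 1 - (s + 1) = j := by omega
        have ej1 : ρ.length - 1 - s = j + 1 := by omega
        have hjlt : j + 1 < α.length := by omega
        have h5 := hle j (by omega)
        rw [getD_reverse ρ _ (by omega), show ρ.length - 1 - j = s + 1 by omega] at h5
        have hihs := ih (by omega)
        rw [ej1] at hihs
        rw [ej0, gammaL_getD_succ ρ s ht]
        refine le_min (by exact_mod_cast h5) ?_
        split_ifs with hd
        · have hst := hstrict j hjlt
          rw [getD_reverse ρ _ (by omega), getD_reverse ρ _ (by omega),
            show ρ.length - 1 - j = s + 1 by omega,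
            show ρ.length - 1 - (j + 1) = s by omega] at hst
          have := hst hd
          omega
        · have := hmono j hjlt
          omega
    intro t ht
    have h2 := hpos (ρ.length - 1 - t) (by omega)
    have := key t ht
    omega
  · intro h
    refine ⟨(List.range ρ.length).map fun j => ((gammaL ρ).getD (ρ.length - 1 - j) 0).toNat,
      ?_, ?_, ?_, ?_, ?_⟩
    case _ => simp
    all_goals
      have hget : ∀ j, j < ρ.length →
          ((List.range ρ.length).map fun j => ((gammaL ρ).getD (ρ.length - 1 - j) 0).toNat).getD
            j 0 = ((gammaL ρ).getD (ρ.length - 1 - j) 0).toNat := by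
        intro j hj
        rw [List.getD_eq_getElem (hn := by simpa using hj)]
        simp
    · -- positivity
      intro j hj
      simp only [List.length_map, List.length_range] at hj
      rw [hget j hj]
      have := h (ρ.length - 1 - j) (by omega)
      omega
    · -- weakly increasing
      intro j hj
      simp only [List.length_map, List.length_range] at hj
      rw [hget j (by omega), hget (j + 1) (by omega)]
      have e0 : ρ.length - 1 - j = (ρ.length - 2 - j) + 1 := by omega
      have e1 : ρ.length - 1 - (j + 1) = ρ.length - 2 - j := by omega
      have := gammaL_mono ρ (ρ.length - 2 - j) (by omega)
      rw [e0, e1]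
      omega
    · -- strict increase at ascents
      intro j hj hasc
      simp only [List.length_map, List.length_range] at hj
      rw [getD_reverse ρ _ (by omega), getD_reverse ρ _ (by omega)] at hasc
      rw [hget j (by omega), hget (j + 1) (by omega)]
      have e0 : ρ.length - 1 - j = (ρ.length - 2 - j) + 1 := by omega
      have e1 : ρ.length - 1 - (j + 1) = ρ.length - 2 - j := by omega
      rw [e0, e1] at hasc ⊢
      have hst := gammaL_strict ρ (ρ.length - 2 - j) (by omega) hasc
      have h1 := h ((ρ.length - 2 - j) + 1) (by omega)
      omega
    · -- bounded by the word
      intro j hj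
      simp only [List.length_map, List.length_range] at hj
      rw [hget j hj, getD_reverse ρ _ (by omega)]
      have := gammaL_le ρ (ρ.length - 1 - j) (by omega)
      have h1 := h (ρ.length - 1 - j) (by omega)
      omega

lemma chain'_and {α : Type*} {R S : α → α → Prop} {l : List α} (hR : l.Chain' R)
    (hS : l.Chain' S) : l.Chain' (fun a b => R a b ∧ S a b) := by
  simp only [List.Chain', List.isChain_iff_getElem] at hR hS ⊢
  exact fun i h => ⟨hR i h, hS i h⟩

/-- The bridge between `desPairsAux` and `glist`. -/
lemma bridge (L : List (List ℕ)) : ∀ (g : ℤ) (p : ℕ),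
    (∀ m ∈ L, m ≠ []) → (∀ m ∈ L, m.Chain' (· < ·)) →
    L.Chain' (fun m₁ m₂ => m₂.headD 0 < m₁.getLastD 0) →
    (∀ m ∈ L.head?, m.headD 0 < p) →
    ((∀ q ∈ desPairsAux (some g) L, 1 ≤ q.1) ↔ ∀ x ∈ glist g p L.flatten, 1 ≤ x) := by
  induction L with
  | nil => intro g p _ _ _ _; simp [desPairsAux]
  | cons m L ih =>
    intro g p hnn hch hbd hhd
    obtain ⟨a, t, rfl⟩ : ∃ a t, m = a :: t := by
      cases m with
      | nil => exact absurd rfl (hnn _ (List.mem_cons_self))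
      | cons a t => exact ⟨a, t, rfl⟩
    have hap : a < p := by simpa using hhd (a :: t) (by simp)
    have hflat : ((a :: t) :: L).flatten = a :: (t ++ L.flatten) := by simp
    rw [hflat, glist_cons, if_pos hap]
    rw [glist_run t a _ L.flatten (hch _ (List.mem_cons_self)) (min_le_left _ _)]
    have hdp : desPairsAux (some g) ((a :: t) :: L) =
        (min ((a : ℤ)) (g - 1), (a :: t).length) ::
          desPairsAux (some (min ((a : ℤ)) (g - 1))) L := by
      simp [desPairsAux]
    rw [hdp]
    have hbd' := List.isChain_cons.1 hbd
    have ihL := ih (min ((a : ℤ)) (g - 1)) (t.getLastD a)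
      (fun m hm => hnn m (List.mem_cons_of_mem _ hm))
      (fun m hm => hch m (List.mem_cons_of_mem _ hm)) hbd'.2
      (fun m hm => by have := hbd'.1 m hm; rwa [List.getLastD_cons] at this)
    constructor
    · intro hq x hx
      rcases List.mem_cons.1 hx with rfl | hx'
      · exact hq _ (List.mem_cons_self)
      rcases List.mem_append.1 hx' with hx2 | hx3
      · obtain ⟨y, _, rfl⟩ := List.mem_map.1 hx2
        exact hq _ (List.mem_cons_self)
      · exact (ihL.1 fun q hq' => hq q (List.mem_cons_of_mem _ hq')) x hx3
    · intro hx q hq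
      rcases List.mem_cons.1 hq with rfl | hq'
      · exact hx _ (List.mem_cons_self)
      · exact ihL.2 (fun x hx' =>
          hx x (List.mem_cons_of_mem _ (List.mem_append_right _ hx'))) q hq'

/-- Statement B (core): the positivity condition of `weakDes` matches `gammaL`. -/
lemma desPairs_iff_gamma (ρ : List ℕ) (hne : ρ.Chain' (· ≠ ·)) :
    (∀ q ∈ desPairsAux none (runsOf ρ), 1 ≤ q.1) ↔ ∀ x ∈ gammaL ρ, 1 ≤ x := by
  cases ρ with
  | nil => simp [runsOf, desPairsAux, gammaL]
  | cons a l =>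
    set L := runsOf (a :: l) with hLdef
    have hflat : L.flatten = a :: l := List.flatten_splitBy _ _
    have hnn : ∀ m ∈ L, m ≠ [] := fun m hm => List.ne_nil_of_mem_splitBy hm
    have hch : ∀ m ∈ L, m.Chain' (· < ·) := by
      intro m hm
      exact (List.isChain_of_mem_splitBy hm).imp (fun a b h => by simpa using h)
    have hbd0 := List.isChain_getLast_head_splitBy (fun x y : ℕ => decide (x < y)) (a :: l)
    have hnemem : [] ∉ L := fun h => hnn [] h rfl
    have hneL : Chain' (fun m₁ m₂ : List ℕ =>
        ∀ x ∈ m₁.getLast?, ∀ y ∈ m₂.head?, x ≠ y) L := by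
      have := (List.isChain_flatten hnemem).1 (hflat ▸ hne)
      exact this.2
    have hcomb : L.Chain' (fun m₁ m₂ => m₂.headD 0 < m₁.getLastD 0) := by
      refine (chain'_and hbd0 hneL).imp ?_
      rintro m₁ m₂ ⟨⟨h1, h2, hfalse⟩, hney⟩
      have hle : m₂.head h2 ≤ m₁.getLast h1 := by
        have := of_decide_eq_false hfalse
        omega
      have hneq : m₁.getLast h1 ≠ m₂.head h2 :=
        hney _ (by rw [List.getLast?_eq_getLast h1]; rfl) _
          (by rw [List.head?_eq_head h2]; rfl)
      have : m₂.head h2 < m₁.getLast h1 := lt_of_le_of_ne hle (fun h => hneq h.symm)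
      rwa [List.headD_eq_head?, List.head?_eq_head h2, Option.getD_some,
        List.getLastD_eq_getLast?, List.getLast?_eq_getLast h1, Option.getD_some]
    rcases hLC : L with _ | ⟨m, L'⟩
    · rw [hLC] at hflat; simp at hflat
    rw [hLC] at hflat hnn hch hcomb
    obtain ⟨b, t, rfl⟩ : ∃ b t, m = b :: t := by
      cases m with
      | nil => exact absurd rfl (hnn _ (List.mem_cons_self))
      | cons b t => exact ⟨b, t, rfl⟩
    simp only [List.flatten_cons, List.cons_append, List.cons.injEq] at hflat
    obtain ⟨rfl, hl⟩ := hflat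
    have hcomb' := List.isChain_cons.1 hcomb
    have hdp : desPairsAux none ((b :: t) :: L') =
        ((b : ℤ), (b :: t).length) :: desPairsAux (some (b : ℤ)) L' := by
      simp [desPairsAux]
    have hgl : gammaL (b :: l) =
        (b : ℤ) :: (t.map (fun _ => (b : ℤ)) ++ glist (b : ℤ) (t.getLastD b) L'.flatten) := by
      rw [gammaL, ← hl, glist_run t b _ L'.flatten (hch _ (List.mem_cons_self)) le_rfl]
    have hbr := bridge L' (b : ℤ) (t.getLastD b)
      (fun m hm => hnn m (List.mem_cons_of_mem _ hm))
      (fun m hm => hch m (List.mem_cons_of_mem _ hm)) hcomb'.2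
      (fun m hm => by have := hcomb'.1 m hm; rwa [List.getLastD_cons] at this)
    rw [hdp, hgl]
    constructor
    · intro hq x hx
      rcases List.mem_cons.1 hx with rfl | hx'
      · exact hq _ (List.mem_cons_self)
      rcases List.mem_append.1 hx' with hx2 | hx3
      · obtain ⟨y, _, rfl⟩ := List.mem_map.1 hx2
        exact hq _ (List.mem_cons_self)
      · exact (hbr.1 fun q hq' => hq q (List.mem_cons_of_mem _ hq')) x hx3
    · intro hx q hq
      rcases List.mem_cons.1 hq with rfl | hq'
      · exact hx _ (List.mem_cons_self)
      · exact hbr.2 (fun x hx' =>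
          hx x (List.mem_cons_of_mem _ (List.mem_append_right _ hx'))) q hq'

lemma forall_mem_iff_getD (l : List ℤ) :
    (∀ x ∈ l, 1 ≤ x) ↔ ∀ t, t < l.length → 1 ≤ l.getD t 0 := by
  constructor
  · intro h t ht
    rw [List.getD_eq_getElem (hn := ht)]
    exact h _ (List.getElem_mem ht)
  · intro h x hx
    obtain ⟨t, ht, rfl⟩ := List.mem_iff_getElem.1 hx
    have := h t ht
    rwa [List.getD_eq_getElem (hn := ht)] at this

end Aux

/-- For a permutation `w` and a reduced expression `ρ ∈ R(w)`,
the weak descent composition `des(ρ)` equals `∅` (i.e. `ρ` is virtual) if and only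
if `ρ` admits no `ρ`-compatible sequence. -/
theorem virtual_iff_no_compatible (w : Equiv.Perm ℕ) (hw : IsPermOfPos w)
    (ρ : List ℕ) (hρ : IsReducedWord w ρ) :
    weakDes ρ = none ↔ ¬ ∃ α : List ℕ, IsCompatible ρ α := by
  have hne := reduced_chain_ne hρ
  have hwd : weakDes ρ = none ↔ ¬ (∀ q ∈ desPairsAux none (runsOf ρ), 1 ≤ q.1) := by
    by_cases h : ∀ q ∈ desPairsAux none (runsOf ρ), 1 ≤ q.1
    · simp [weakDes, h]
    · simp [weakDes, h]
  have hiff : (∃ α : List ℕ, IsCompatible ρ α) ↔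
      (∀ q ∈ desPairsAux none (runsOf ρ), 1 ≤ q.1) := by
    rw [compat_iff_gamma, desPairs_iff_gamma ρ hne, forall_mem_iff_getD, gammaL_length]
  rw [hwd]
  exact not_congr hiff.symm
end

section
/- Let a be a weak composition of length ℓ and suppose there exist indices 1 ≤ r ≤ s ≤ ℓ such that a_i = 0 for all i < r and a_i ≠ 0 for all r ≤ i ≤ s. Then for any k ≤ s, the fundamental slide polynomial 𝔉_a with the variables x_{k+1}, …, x_ℓ set to 0 equals the fundamental quasisymmetric polynomial F_{flat(a)}(x_1, …, x_k). -/
open Equiv MvPolynomial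

lemma flat_append (x y : List ℕ) : flat (x ++ y) = flat x ++ flat y :=
  List.filter_append ..

lemma sum_flat (l : List ℕ) : (flat l).sum = l.sum := by
  induction l with
  | nil => rfl
  | cons h t ih =>
    by_cases hh : h = 0
    · simp [flat, List.filter, hh] at *; omega
    · simp [flat, List.filter, hh] at *; omega

lemma flat_take_prefix (l : List ℕ) (m : ℕ) :
    (flat l).take ((flat (l.take m)).length) = flat (l.take m) := by
  have : flat l = flat (l.take m) ++ flat (l.drop m) := by
    rw [← flat_append, List.take_append_drop]
  rw [this, List.take_left]

lemma sum_take_mono (l : List ℕ) {c c' : ℕ} (h : c ≤ c') :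
    (l.take c).sum ≤ (l.take c').sum := by
  have : c' = c + (c' - c) := by omega
  rw [this, List.take_add, List.sum_append]
  exact Nat.le_add_right _ _

lemma length_le_flatten_length {L : List (List ℕ)} (h : ∀ l ∈ L, l ≠ []) :
    L.length ≤ L.flatten.length := by
  induction L with
  | nil => simp
  | cons x t ih =>
    have hx : x ≠ [] := h x (List.mem_cons_self ..)
    have : 1 ≤ x.length := List.length_pos_iff.mpr hx
    simp only [List.flatten_cons, List.length_append, List.length_cons]
    have := ih (fun l hl => h l (List.mem_cons_of_mem _ hl))
    omega

lemma refines_sum {β α : List ℕ} (h : Refines β α) : β.sum = α.sum := by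
  obtain ⟨L, -, hf, hm⟩ := h
  rw [← hf, ← hm, List.sum_flatten]

lemma refines_take_le {β α : List ℕ} (h : Refines β α) (t c' : ℕ)
    (ht : t ≤ α.length) (hc : β.length + t ≤ c' + α.length) :
    (α.take t).sum ≤ (β.take c').sum := by
  obtain ⟨L, hne, hf, hm⟩ := h
  set P := (L.take t).flatten with hP
  have hsplit : β = P ++ (L.drop t).flatten := by
    rw [hP, ← List.flatten_append, List.take_append_drop, hf]
  have h1 : (α.take t).sum = (β.take P.length).sum := by
    rw [hsplit, List.take_left, ← hm, ← List.map_take, ← List.sum_flatten]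
  have h2 : α.length = L.length := by rw [← hm, List.length_map]
  have h3 : (L.drop t).length ≤ (L.drop t).flatten.length :=
    length_le_flatten_length (fun l hl => hne l (List.mem_of_mem_drop hl))
  have h4 : β.length = P.length + (L.drop t).flatten.length := by
    rw [hsplit, List.length_append]
  have h5 : P.length ≤ c' := by
    have := (List.length_drop : (L.drop t).length = L.length - t) ▸ h3
    omega
  rw [h1]; exact sum_take_mono β h5

lemma flat_split (l : List ℕ) (m : ℕ) :
    flat l = flat (l.take m) ++ flat (l.drop m) := by
  rw [← flat_append, List.take_append_drop]

lemma flat_length_eq_of_ne (l : List ℕ) (h : ∀ x ∈ l, x ≠ 0) :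
    (flat l).length = l.length := by
  unfold flat
  rw [List.filter_eq_self.mpr (by intro x hx; simpa using h x hx)]

lemma flat_nil_of_zero (l : List ℕ) (h : ∀ x ∈ l, x = 0) : flat l = [] := by
  unfold flat
  rw [List.filter_eq_nil_iff.mpr (by intro x hx; simpa using h x hx)]

lemma dom_key (a : List ℕ) (r s : ℕ) (hr : 1 ≤ r) (hrs : r ≤ s) (hs : s ≤ a.length)
    (hzero : ∀ i, 1 ≤ i → i < r → a.getD (i - 1) 0 = 0)
    (hpos : ∀ i, r ≤ i → i ≤ s → a.getD (i - 1) 0 ≠ 0)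
    (k : ℕ) (hk : k ≤ s) (b : List ℕ) (hb : b.length = k)
    (href : Refines (flat b) (flat a)) :
    ∀ m, (a.take m).sum ≤ (b.take m).sum := by
  -- getElem versions of the hypotheses
  have hzeroE : ∀ i, i < r - 1 → (h : i < a.length) → a[i] = 0 := by
    intro i hi h
    have := hzero (i + 1) (by omega) (by omega)
    simp only [Nat.add_sub_cancel] at this
    rwa [List.getD_eq_getElem a 0 h] at this
  have hposE : ∀ i, r - 1 ≤ i → i < s → (h : i < a.length) → a[i] ≠ 0 := by
    intro i hi his h
    have := hpos (i + 1) (by omega) (by omega)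
    simp only [Nat.add_sub_cancel] at this
    rwa [List.getD_eq_getElem a 0 h] at this
  -- length of flat a is at least s - (r-1)
  have hLa : s - (r - 1) ≤ (flat a).length := by
    set l2 := (a.drop (r - 1)).take (s - (r - 1)) with hl2
    have hl2len : l2.length = s - (r - 1) := by
      simp [hl2]; omega
    have hl2ne : ∀ x ∈ l2, x ≠ 0 := by
      intro x hx
      obtain ⟨i, hi, rfl⟩ := List.mem_iff_getElem.mp hx
      have hi' : i < s - (r - 1) := by omega
      have h1 : (r - 1) + i < a.length := by omega
      have : l2[i] = a[(r - 1) + i] := by simp [hl2]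
      rw [this]
      exact hposE _ (by omega) (by omega) h1
    have h1 : (flat l2).length = s - (r - 1) := by
      rw [flat_length_eq_of_ne _ hl2ne, hl2len]
    have h2 : flat a = flat (a.take (r - 1)) ++ (flat l2 ++ flat ((a.drop (r - 1)).drop (s - (r - 1)))) := by
      rw [flat_split a (r - 1), flat_split (a.drop (r - 1)) (s - (r - 1))]
    have := congrArg List.length h2
    simp only [List.length_append] at this
    omega
  intro m
  by_cases hm : k ≤ m
  · have hbt : b.take m = b := List.take_of_length_le (by omega)
    have h1 : b.sum = a.sum := by
      have := refines_sum href
      rw [sum_flat, sum_flat] at this; exact this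
    have h2 : (a.take m).sum ≤ a.sum := by
      conv_rhs => rw [← List.take_append_drop m a]
      rw [List.sum_append]; exact Nat.le_add_right _ _
    rw [hbt, h1]; exact h2
  · push_neg at hm
    by_cases hmr : m ≤ r - 1
    · have : (a.take m).sum = 0 := by
        apply List.sum_eq_zero
        intro x hx
        obtain ⟨i, hi, rfl⟩ := List.mem_iff_getElem.mp hx
        have h1 : i < a.length := by simp at hi; omega
        have : (a.take m)[i] = a[i] := by simp
        rw [this]
        exact hzeroE i (by simp at hi; omega) h1
      omega
    · push_neg at hmr
      set t := (flat (a.take m)).length with htdef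
      set j := (flat (b.take m)).length with hjdef
      have h1 : (a.take m).sum = ((flat a).take t).sum := by
        rw [flat_take_prefix, sum_flat]
      have h2 : (b.take m).sum = ((flat b).take j).sum := by
        rw [flat_take_prefix, sum_flat]
      have ht : t ≤ (flat a).length := by
        have := congrArg List.length (flat_split a m)
        simp only [List.length_append] at this
        omega
      -- t ≤ m - (r - 1)
      have htb : t + (r - 1) ≤ m := by
        have hsp : flat (a.take m) = flat ((a.take m).take (r - 1)) ++ flat ((a.take m).drop (r - 1)) :=
          flat_split _ _
        have hz : flat ((a.take m).take (r - 1)) = [] := by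
          apply flat_nil_of_zero
          intro x hx
          obtain ⟨i, hi, rfl⟩ := List.mem_iff_getElem.mp hx
          simp only [List.length_take] at hi
          have h1 : i < a.length := by omega
          have : ((a.take m).take (r - 1))[i] = a[i] := by simp
          rw [this]
          exact hzeroE i (by omega) h1
        have := congrArg List.length hsp
        rw [hz] at this
        simp only [List.nil_append] at this
        have h3 : (flat ((a.take m).drop (r - 1))).length ≤ ((a.take m).drop (r - 1)).length :=
          List.length_filter_le _ _
        have h4 : ((a.take m).drop (r - 1)).length = min m a.length - (r - 1) := by simp
        omega
      -- (flat b).length ≤ j + (k - m)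
      have hjb : (flat b).length ≤ j + (k - m) := by
        have := congrArg List.length (flat_split b m)
        simp only [List.length_append] at this
        have h3 : (flat (b.drop m)).length ≤ (b.drop m).length := List.length_filter_le _ _
        have h4 : (b.drop m).length = k - m := by simp [hb]
        omega
      have key := refines_take_le href t j ht (by omega)
      omega

lemma finite_bdd (n S0 : ℕ) : {b : List ℕ | b.length = n ∧ ∀ x ∈ b, x ≤ S0}.Finite := by
  induction n with
  | zero =>
    apply Set.Finite.subset (Set.finite_singleton ([] : List ℕ))
    rintro b ⟨h, -⟩
    simp [List.length_eq_zero_iff.mp h]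
  | succ n ih =>
    apply Set.Finite.subset (Set.Finite.image2 (fun x l => x :: l) (Set.finite_Iic S0) ih)
    rintro b ⟨hl, hb⟩
    match b with
    | x :: t =>
      exact ⟨x, hb x (by simp), t, ⟨by simpa using hl, fun y hy => hb y (by simp [hy])⟩, rfl⟩

lemma trailing_eq (b : List ℕ) (k : ℕ) (h : ∀ j, k ≤ j → b.getD j 0 = 0) :
    b = b.take k ++ List.replicate (b.length - k) 0 := by
  conv_lhs => rw [← List.take_append_drop k b]
  congr 1
  rw [List.eq_replicate_iff]
  refine ⟨by simp, fun x hx => ?_⟩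
  obtain ⟨i, hi, rfl⟩ := List.mem_iff_getElem.mp hx
  have h1 : k + i < b.length := by simp at hi; omega
  have h2 : (b.drop k)[i] = b[k + i] := by simp
  rw [h2, ← List.getD_eq_getElem b 0 h1]
  exact h (k + i) (by omega)

lemma getD_append_rep (b : List ℕ) (d j : ℕ) (hj : b.length ≤ j) :
    (b ++ List.replicate d 0).getD j 0 = 0 := by
  rw [List.getD_eq_getElem?_getD, List.getElem?_append_right hj, List.getElem?_replicate]
  split <;> simp

lemma wcMonomial_extend (b : List ℕ) (d : ℕ) :
    wcMonomial (b ++ List.replicate d 0) = wcMonomial b := by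
  unfold wcMonomial
  rw [List.length_append, List.length_replicate, List.range_add, List.map_append,
    List.prod_append, List.map_map]
  have h1 : ((List.range d).map ((fun j => X (j + 1) ^ (b ++ List.replicate d 0).getD j 0) ∘
      fun x => b.length + x)).prod = (1 : MvPolynomial ℕ ℤ) := by
    apply List.prod_eq_one
    intro x hx
    simp only [List.mem_map] at hx
    obtain ⟨y, -, rfl⟩ := hx
    rw [Function.comp_apply, getD_append_rep b d _ (by omega), pow_zero]
  rw [h1, mul_one]
  apply congrArg
  apply List.map_congr_left
  intro j hj
  rw [List.mem_range] at hj
  have : (b ++ List.replicate d 0).getD j 0 = b.getD j 0 := by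
    rw [List.getD_eq_getElem?_getD, List.getElem?_append_left hj, ← List.getD_eq_getElem?_getD]
  rw [this]

lemma truncVars_wcMonomial_of_trailing (k : ℕ) (b : List ℕ)
    (h : ∀ j, k ≤ j → b.getD j 0 = 0) :
    truncVars k (wcMonomial b) = wcMonomial b := by
  unfold wcMonomial truncVars
  rw [map_list_prod, List.map_map]
  apply congrArg
  apply List.map_congr_left
  intro j hj
  rw [List.mem_range] at hj
  simp only [Function.comp_apply, map_pow, aeval_X]
  by_cases hk : j + 1 ≤ k
  · rw [if_pos hk]
  · rw [h j (by omega), pow_zero, pow_zero]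

lemma truncVars_wcMonomial_of_nontrailing (k : ℕ) (b : List ℕ)
    (j : ℕ) (hj : j < b.length) (hk : k ≤ j) (h : b.getD j 0 ≠ 0) :
    truncVars k (wcMonomial b) = 0 := by
  unfold wcMonomial truncVars
  rw [map_list_prod, List.map_map]
  apply List.prod_eq_zero
  rw [List.mem_map]
  refine ⟨j, List.mem_range.mpr hj, ?_⟩
  simp only [Function.comp_apply, map_pow, aeval_X]
  rw [if_neg (by omega), zero_pow h]

/-- Let `a` be a weak composition of length `ℓ` such that, for some
`1 ≤ r ≤ s ≤ ℓ`, the part `a_i` is zero for all `i < r` and nonzero for all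
`r ≤ i ≤ s` (parts are indexed starting from `1`).  Then for any `k ≤ s`, the
fundamental slide polynomial `𝔉_a` with the variables `x_{k+1}, …, x_ℓ` set to `0`
equals the fundamental quasisymmetric polynomial `F_{flat(a)}(x_1, …, x_k)`. -/

theorem fundSlide_trunc_eq_fundQuasi (a : List ℕ) (r s : ℕ)
    (hr : 1 ≤ r) (hrs : r ≤ s) (hs : s ≤ a.length)
    (hzero : ∀ i, 1 ≤ i → i < r → a.getD (i - 1) 0 = 0)
    (hpos : ∀ i, r ≤ i → i ≤ s → a.getD (i - 1) 0 ≠ 0)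
    (k : ℕ) (hk : k ≤ s) :
    truncVars k (fundSlide a) = fundQuasi k (flat a) := by
  classical
  have hkn : k ≤ a.length := le_trans hk hs
  have hsum : ∀ b : List ℕ, Refines (flat b) (flat a) → b.sum = a.sum := by
    intro b h
    have := refines_sum h
    rwa [sum_flat, sum_flat] at this
  have hSfin : {b : List ℕ | b.length = a.length ∧ Dominates b a ∧
      Refines (flat b) (flat a)}.Finite := by
    apply Set.Finite.subset (finite_bdd a.length a.sum)
    rintro b ⟨h1, -, h3⟩
    exact ⟨h1, fun x hx => hsum b h3 ▸ List.single_le_sum (fun y _ => Nat.zero_le y) x hx⟩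
  have hTfin : {b : List ℕ | b.length = k ∧ Refines (flat b) (flat a)}.Finite := by
    apply Set.Finite.subset (finite_bdd k a.sum)
    rintro b ⟨h1, h3⟩
    exact ⟨h1, fun x hx => hsum b h3 ▸ List.single_le_sum (fun y _ => Nat.zero_le y) x hx⟩
  unfold fundSlide fundQuasi
  rw [finsum_mem_eq_finite_toFinset_sum _ hSfin, finsum_mem_eq_finite_toFinset_sum _ hTfin,
    map_sum]
  have step : ∀ b ∈ hSfin.toFinset, truncVars k (wcMonomial b) =
      if ∀ j, k ≤ j → b.getD j 0 = 0 then wcMonomial b else 0 := by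
    intro b _
    split
    case isTrue h => exact truncVars_wcMonomial_of_trailing k b h
    case isFalse h =>
      push_neg at h
      obtain ⟨j, hj1, hj2⟩ := h
      have hjlen : j < b.length := by
        by_contra hcon
        apply hj2
        rw [List.getD_eq_getElem?_getD, List.getElem?_eq_none (by omega)]
        rfl
      exact truncVars_wcMonomial_of_nontrailing k b j hjlen hj1 hj2
  rw [Finset.sum_congr rfl step, ← Finset.sum_filter]
  have hflatrep : ∀ (b : List ℕ) (d : ℕ), flat (b ++ List.replicate d 0) = flat b := by
    intro b d
    rw [flat_append, flat_nil_of_zero _ (fun x hx => List.eq_of_mem_replicate hx),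
      List.append_nil]
  apply Finset.sum_nbij' (i := fun b => b.take k)
    (j := fun b => b ++ List.replicate (a.length - k) 0)
  · intro b hb
    rw [Finset.mem_filter, Set.Finite.mem_toFinset] at hb
    obtain ⟨⟨h1, h2, h3⟩, hP⟩ := hb
    rw [Set.Finite.mem_toFinset]
    constructor
    · simp only [List.length_take, h1]; omega
    · have htr := trailing_eq b k hP
      have hfb : flat b = flat (b.take k) := by
        conv_lhs => rw [htr]
        rw [hflatrep]
      rw [← hfb]; exact h3
  · intro b hb
    rw [Set.Finite.mem_toFinset] at hb
    obtain ⟨h1, h3⟩ := hb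
    rw [Finset.mem_filter, Set.Finite.mem_toFinset]
    refine ⟨⟨?_, ?_, ?_⟩, ?_⟩
    · simp only [List.length_append, List.length_replicate, h1]; omega
    · intro m
      have key := dom_key a r s hr hrs hs hzero hpos k hk b h1 h3 m
      rw [List.take_append, List.sum_append]
      have hz : ((List.replicate (a.length - k) 0).take (m - b.length)).sum = 0 := by
        apply List.sum_eq_zero
        intro x hx
        exact List.eq_of_mem_replicate (List.mem_of_mem_take hx)
      omega
    · rw [hflatrep]; exact h3
    · intro j hj
      exact getD_append_rep b _ j (by omega)
  · intro b hb
    rw [Finset.mem_filter, Set.Finite.mem_toFinset] at hb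
    obtain ⟨⟨h1, -, -⟩, hP⟩ := hb
    rw [← h1]
    exact (trailing_eq b k hP).symm
  · intro b hb
    rw [Set.Finite.mem_toFinset] at hb
    obtain ⟨h1, -⟩ := hb
    conv_lhs => rw [← h1]
    exact List.take_left ..
  · intro b hb
    rw [Finset.mem_filter, Set.Finite.mem_toFinset] at hb
    obtain ⟨⟨h1, -, -⟩, hP⟩ := hb
    conv_lhs => rw [trailing_eq b k hP]
    rw [wcMonomial_extend]
end
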